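/- Let W : G × G → M_d(𝕂) be a partial cotranslation with values in d × d matrices over a field 𝕂 (equivalently, endomorphisms of a finite-dimensional vector space). Then rank W(g, h) = rank W(k, ℓ) for all g, h, k, ℓ ∈ G. -/
import Mathlib


/-- For a matrix-valued partial cotranslation `W : G × G → M_d(𝕂)`, the rank of
`W(g,h)` is independent of both arguments. -/
theorem partial_cotranslation_rank_const {𝕂 : Type*} [Field 𝕂]
    {G : Type*} [Group G] {d : ℕ}
    (W : G → G → Matrix (Fin d) (Fin d) 𝕂)
    (hW : ∀ g h k : G, W g (k * h) = W (h * g) k * W g h) :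
    ∀ g h k ℓ : G, (W g h).rank = (W k ℓ).rank := by
  -- rank of W g x is ≤ rank of W g h for all x, h
  have h1 : ∀ g x h : G, (W g x).rank ≤ (W g h).rank := by
    intro g x h
    have e := hW g h (x * h⁻¹)
    rw [inv_mul_cancel_right] at e
    rw [e]
    exact Matrix.rank_mul_le_right _ _
  -- hence rank only depends on first argument
  have h2 : ∀ g x h : G, (W g x).rank = (W g h).rank := fun g x h =>
    le_antisymm (h1 g x h) (h1 g h x)
  -- rank at base g is ≤ rank at base h*g
  have h3 : ∀ g k : G, (W g 1).rank ≤ (W k 1).rank := by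
    intro g k
    have e := hW g (k * g⁻¹) 1
    rw [inv_mul_cancel_right] at e
    calc (W g 1).rank = (W g (1 * (k * g⁻¹))).rank := h2 g 1 _
      _ ≤ (W k 1).rank := by rw [e]; exact Matrix.rank_mul_le_left _ _
  intro g h k ℓ
  calc (W g h).rank = (W g 1).rank := h2 g h 1
    _ = (W k 1).rank := le_antisymm (h3 g k) (h3 k g)
    _ = (W k ℓ).rank := h2 k 1 ℓ
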